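/- Let n ≤ m and let L, M ⊆ ℝⁿ be absolutely permutation-invariant sets with L ⊆ cl M. Then Σ(L) ⊆ cl Σ(M), where for S ⊆ ℝⁿ the lift Σ(S) := {U·(Diag s)·Vᵀ : U an n×n orthogonal matrix, V an m×m orthogonal matrix, s ∈ S} is a set of real n×m matrices, Diag s denotes the n×m matrix whose (i,i) entries are sᵢ and all other entries are zero, and closures are taken with respect to the Frobenius norm (respectively the Euclidean norm on ℝⁿ). -/
import Mathlib


open Matrix

noncomputable section

/-- The Euclidean norm on `ℝⁿ` (vectors as functions). -/
def vnorm {n : ℕ} (x : Fin n → ℝ) : ℝ := Real.sqrt (∑ i, x i ^ 2)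

/-- Euclidean distance from a point to a set in `ℝⁿ`. -/
def vdistSet {n : ℕ} (x : Fin n → ℝ) (Q : Set (Fin n → ℝ)) : ℝ :=
  sInf ((fun y => vnorm (x - y)) '' Q)

/-- The Frobenius norm of a real matrix. -/
def frobNorm {n m : ℕ} (A : Matrix (Fin n) (Fin m) ℝ) : ℝ :=
  Real.sqrt (∑ i, ∑ j, A i j ^ 2)

/-- Frobenius distance from a matrix to a set of matrices. -/
def frobDistSet {n m : ℕ} (X : Matrix (Fin n) (Fin m) ℝ)
    (S : Set (Matrix (Fin n) (Fin m) ℝ)) : ℝ :=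
  sInf ((fun Z => frobNorm (X - Z)) '' S)

/-- `Q ⊆ ℝⁿ` is absolutely permutation-invariant: stable under permutations of coordinates
and coordinate-wise changes of sign. -/
def AbsPermInv {n : ℕ} (Q : Set (Fin n → ℝ)) : Prop :=
  ∀ (π : Equiv.Perm (Fin n)) (e : Fin n → ℝ), (∀ i, e i = 1 ∨ e i = -1) →
    ∀ x ∈ Q, (fun i => e i * x (π i)) ∈ Q

/-- The `n × m` matrix with `(i,i)` entries `s i` and all other entries zero. -/
def rdiag (n m : ℕ) (s : Fin n → ℝ) : Matrix (Fin n) (Fin m) ℝ :=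
  Matrix.of fun i j => if (j : ℕ) = (i : ℕ) then s i else 0

/-- The spectral lift of a set `S ⊆ ℝⁿ` to the `n × m` real matrices. -/
def lift (n m : ℕ) (S : Set (Fin n → ℝ)) : Set (Matrix (Fin n) (Fin m) ℝ) :=
  {A | ∃ (U : Matrix (Fin n) (Fin n) ℝ) (V : Matrix (Fin m) (Fin m) ℝ),
    U * Uᵀ = 1 ∧ V * Vᵀ = 1 ∧ ∃ s ∈ S, A = U * rdiag n m s * Vᵀ}

lemma frob_sq_eq_trace {n m : ℕ} (A : Matrix (Fin n) (Fin m) ℝ) :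
    ∑ i, ∑ j, A i j ^ 2 = Matrix.trace (A * Aᵀ) := by
  simp [Matrix.trace, Matrix.mul_apply, Matrix.diag, sq]

lemma frob_orth {n m : ℕ} (U : Matrix (Fin n) (Fin n) ℝ) (V : Matrix (Fin m) (Fin m) ℝ)
    (hU : U * Uᵀ = 1) (hV : V * Vᵀ = 1) (A : Matrix (Fin n) (Fin m) ℝ) :
    frobNorm (U * A * Vᵀ) = frobNorm A := by
  have hV' : Vᵀ * V = 1 := mul_eq_one_comm.mp hV
  have hU' : Uᵀ * U = 1 := mul_eq_one_comm.mp hU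
  unfold frobNorm
  rw [frob_sq_eq_trace, frob_sq_eq_trace]
  have h : (U * A * Vᵀ) * (U * A * Vᵀ)ᵀ = U * (A * Aᵀ) * Uᵀ := by
    simp only [Matrix.transpose_mul, Matrix.transpose_transpose]
    calc U * A * Vᵀ * (V * (Aᵀ * Uᵀ)) = U * A * (Vᵀ * V) * (Aᵀ * Uᵀ) := by
          simp only [Matrix.mul_assoc]
      _ = U * (A * Aᵀ) * Uᵀ := by rw [hV']; simp only [Matrix.mul_one, Matrix.mul_assoc]
  rw [h, Matrix.trace_mul_comm, ← Matrix.mul_assoc, hU', Matrix.one_mul]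

lemma frob_rdiag {n m : ℕ} (hnm : n ≤ m) (v : Fin n → ℝ) :
    frobNorm (rdiag n m v) = vnorm v := by
  unfold frobNorm vnorm rdiag
  congr 1
  refine Finset.sum_congr rfl fun i _ => ?_
  have h : ∀ j : Fin m, ((j : ℕ) = (i : ℕ)) ↔ j = Fin.castLE hnm i := by
    intro j; rw [Fin.ext_iff]; simp
  simp only [Matrix.of_apply, h, apply_ite (· ^ 2)]
  simp [Finset.sum_ite_eq']

lemma rdiag_sub {n m : ℕ} (s y : Fin n → ℝ) :
    rdiag n m s - rdiag n m y = rdiag n m (s - y) := by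
  ext i j
  simp only [rdiag, Matrix.sub_apply, Matrix.of_apply, Pi.sub_apply]
  split <;> simp

/-- **Lifts preserve the frontier inclusion.** Here closure in `ℝⁿ` is with respect to the
Euclidean norm and closure in matrix space is with respect to the Frobenius norm,
expressed via the corresponding `ε`-characterizations. -/
theorem lift_subset_closure_lift
    (n m : ℕ) (hnm : n ≤ m) (L M : Set (Fin n → ℝ))
    (hL : AbsPermInv L) (hM : AbsPermInv M)
    (hcl : ∀ x ∈ L, ∀ ε > (0 : ℝ), ∃ y ∈ M, vnorm (x - y) < ε) :
    ∀ Z ∈ lift n m L, ∀ ε > (0 : ℝ), ∃ W ∈ lift n m M, frobNorm (Z - W) < ε := by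
  rintro Z ⟨U, V, hU, hV, s, hsL, rfl⟩ ε hε
  obtain ⟨y, hyM, hy⟩ := hcl s hsL ε hε
  refine ⟨U * rdiag n m y * Vᵀ, ⟨U, V, hU, hV, y, hyM, rfl⟩, ?_⟩
  have : U * rdiag n m s * Vᵀ - U * rdiag n m y * Vᵀ = U * rdiag n m (s - y) * Vᵀ := by
    rw [← rdiag_sub]
    simp [Matrix.mul_sub, Matrix.sub_mul]
  rw [this, frob_orth U V hU hV, frob_rdiag hnm]
  exact hy

end
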